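/- arXiv:1704.01029 — 2 statements merged into one kernel-verified Lean document; each statement's English description precedes it below -/
import Mathlib

section
/- Let p ∈ (1,2] and let D ≥ 0 be a constant such that for every N, n ∈ ℕ and every bilinear form T : ℝᴺ × ℝⁿ → ℝ one has (∑_{j=1}^{n} (∑_{i=1}^{N} |T(e_i,e_j)|^{p})^{2/p})^{1/2} ≤ D · sup{|T(x,y)| : ‖x‖_{ℓ_{p/(p−1)}} ≤ 1, ‖y‖_{ℓ_∞} ≤ 1}. Then for every n ∈ ℕ and every sequence of real scalars (a_j)_{j=1}^{n}, the Khintchine inequality (∑_{j=1}^{n} |a_j|²)^{1/2} ≤ D · (∫₀¹ |∑_{j=1}^{n} a_j r_j(t)|^{p} dt)^{1/p} holds. -/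
open MeasureTheory Real Filter

/-- The `j`-th Rademacher function, `r_j(t) = sgn(sin(2^j π t))`. -/
noncomputable def rademacher (j : ℕ) (t : ℝ) : ℝ :=
  Real.sign (Real.sin ((2 : ℝ) ^ j * Real.pi * t))

/-- `p₀ ∈ (1,2)` is the unique solution of `Γ((p₀+1)/2) = √π / 2`. -/
noncomputable def khintchineP0 : ℝ :=
  sInf {p : ℝ | 1 < p ∧ p < 2 ∧ Real.Gamma ((p + 1) / 2) = Real.sqrt Real.pi / 2}

/-- The optimal constant `A_r` in the Khintchine inequality. -/
noncomputable def khintchineA (r : ℝ) : ℝ :=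
  if r ≤ khintchineP0 then (2 : ℝ) ^ (1 / r - 1 / 2)
  else if r < 2 then
    (1 / Real.sqrt 2) * (Real.Gamma ((r + 1) / 2) / Real.sqrt Real.pi) ^ (-(1 / r))
  else 1

/-- The `ℓ_p` norm of a vector in `ℝⁿ` (for finite `p`). -/
noncomputable def lpNorm (p : ℝ) {n : ℕ} (x : Fin n → ℝ) : ℝ :=
  (∑ i, |x i| ^ p) ^ (1 / p)

/-- The `ℓ_∞` norm of a vector in `ℝⁿ`. -/
noncomputable def linfNorm {n : ℕ} (x : Fin n → ℝ) : ℝ :=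
  ⨆ i, |x i|

/-- The norm `‖T‖_{p,∞} = sup{|T(x,y)| : ‖x‖_{ℓ_p} ≤ 1, ‖y‖_{ℓ_∞} ≤ 1}` of a bilinear form. -/
noncomputable def bilinOpNorm (p : ℝ) {N n : ℕ}
    (T : (Fin N → ℝ) →ₗ[ℝ] (Fin n → ℝ) →ₗ[ℝ] ℝ) : ℝ :=
  sSup {c : ℝ | ∃ (x : Fin N → ℝ) (y : Fin n → ℝ),
    lpNorm p x ≤ 1 ∧ linfNorm y ≤ 1 ∧ c = |T x y|}

/-! ### Auxiliary material -/

/-- The sign of the `(j+1)`-st Rademacher function on the `i`-th dyadic interval of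
length `2^{-n}`. -/
noncomputable def radSign (n i j : ℕ) : ℝ :=
  if Nat.testBit i (n - 1 - j) then -1 else 1

lemma radSign_abs (n i j : ℕ) : |radSign n i j| = 1 := by
  unfold radSign; split <;> simp

lemma radSign_xor (n i j k : ℕ) (hj : j < n) (hk : k < n) :
    radSign n (i ^^^ 2 ^ (n - 1 - k)) j = if j = k then -radSign n i j else radSign n i j := by
  unfold radSign
  rcases eq_or_ne j k with rfl | hne
  · simp only [Nat.testBit_xor, Nat.testBit_two_pow_self, if_pos rfl]
    cases Nat.testBit i (n-1-j) <;> simp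
  · simp [Nat.testBit_xor, Nat.testBit_two_pow_of_ne (Ne.symm (by omega : (n-1-j) ≠ (n-1-k))), hne]

lemma rademacher_eq_radSign {n i j : ℕ} (hj : j < n) {t : ℝ}
    (h1 : (i : ℝ) / 2 ^ n < t) (h2 : t < ((i : ℝ) + 1) / 2 ^ n) :
    rademacher (j + 1) t = radSign n i j := by
  set e := n - 1 - j with he
  set k := i / 2 ^ e with hk
  have hpe : (0:ℕ) < 2 ^ e := Nat.pow_pos (by norm_num)
  have hk1 : k * 2 ^ e ≤ i := Nat.div_mul_le_self i _
  have hk2 : i + 1 ≤ (k + 1) * 2 ^ e := by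
    have hmod : 2 ^ e * k + i % 2 ^ e = i := Nat.div_add_mod i (2 ^ e)
    have hlt : i % 2 ^ e < 2 ^ e := Nat.mod_lt i hpe
    have hexp : (k + 1) * 2 ^ e = 2 ^ e * k + 2 ^ e := by ring
    omega
  have h2n : ((2:ℝ) ^ n) = 2 ^ (j+1) * 2 ^ e := by
    rw [← pow_add]; congr 1; omega
  have hppos : (0:ℝ) < 2 ^ (j+1) := by positivity
  have hepos : (0:ℝ) < 2 ^ e := by positivity
  have hb1 : (k : ℝ) < 2 ^ (j+1) * t := by
    have hle : (k : ℝ) * 2 ^ e ≤ (i : ℝ) := by exact_mod_cast hk1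
    have h1' : (i : ℝ) < 2 ^ n * t := by
      rw [div_lt_iff₀ (by positivity)] at h1; linarith [h1]
    rw [h2n] at h1'
    nlinarith
  have hb2 : 2 ^ (j+1) * t < (k : ℝ) + 1 := by
    have hc : ((i : ℝ) + 1) ≤ ((k : ℝ) + 1) * 2 ^ e := by exact_mod_cast hk2
    have h2' : 2 ^ n * t < (i : ℝ) + 1 := by
      rw [lt_div_iff₀ (by positivity)] at h2; linarith [h2]
    rw [h2n] at h2'
    nlinarith
  have hsin : Real.sin (2 ^ (j+1) * Real.pi * t)
      = (-1) ^ k * Real.sin (2 ^ (j+1) * Real.pi * t - k * Real.pi) := by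
    have := Real.sin_add_nat_mul_pi (2 ^ (j+1) * Real.pi * t - k * Real.pi) k
    simpa [mul_comm] using this
  have harg1 : 0 < 2 ^ (j+1) * Real.pi * t - k * Real.pi := by
    have := Real.pi_pos
    nlinarith
  have harg2 : 2 ^ (j+1) * Real.pi * t - k * Real.pi < Real.pi := by
    have := Real.pi_pos
    nlinarith
  have hsinpos : 0 < Real.sin (2 ^ (j+1) * Real.pi * t - k * Real.pi) :=
    Real.sin_pos_of_pos_of_lt_pi harg1 harg2
  have hbit : Nat.testBit i e = decide (k % 2 = 1) := by
    rw [Nat.testBit_eq_decide_div_mod_eq]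
  unfold rademacher radSign
  rw [← he, hbit]
  rcases Nat.even_or_odd k with hke | hko
  · have hpos : Real.sin ((2:ℝ) ^ (j+1) * Real.pi * t) > 0 := by
      rw [hsin, hke.neg_one_pow]; linarith
    rw [Real.sign_of_pos hpos]
    have : k % 2 = 0 := Nat.even_iff.mp hke
    simp [this]
  · have hneg : Real.sin ((2:ℝ) ^ (j+1) * Real.pi * t) < 0 := by
      rw [hsin, hko.neg_one_pow]; linarith
    rw [Real.sign_of_neg hneg]
    have : k % 2 = 1 := Nat.odd_iff.mp hko
    simp [this]

lemma integral_rad_eq (p : ℝ) (n : ℕ) (a : Fin n → ℝ) :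
    (∫ t in Set.Icc (0:ℝ) 1, |∑ j : Fin n, a j * rademacher (j.1 + 1) t| ^ p)
      = ∑ i ∈ Finset.range (2 ^ n),
          ((2:ℝ) ^ n)⁻¹ * |∑ j : Fin n, a j * radSign n i j.1| ^ p := by
  set g : ℝ → ℝ := fun t => |∑ j : Fin n, a j * rademacher (j.1 + 1) t| ^ p with hg
  set v : ℕ → ℝ := fun i => |∑ j : Fin n, a j * radSign n i j.1| ^ p with hv
  set c : ℕ → ℝ := fun i => (i : ℝ) / 2 ^ n with hc
  have hmono : ∀ i : ℕ, c i ≤ c (i + 1) := by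
    intro i
    apply div_le_div_of_nonneg_right ?_ (by positivity)
    · push_cast; linarith
  have hae : ∀ i, i < 2 ^ n →
      (∀ᵐ t ∂(volume : Measure ℝ), t ∈ Set.uIoc (c i) (c (i+1)) → g t = v i) := by
    intro i hi
    have hne : ∀ᵐ t : ℝ ∂volume, t ≠ c (i+1) := by
      rw [ae_iff]
      have : {t : ℝ | ¬ t ≠ c (i+1)} = {c (i+1)} := by ext t; simp
      rw [this, Real.volume_singleton]
    filter_upwards [hne] with t ht hmem
    rw [Set.uIoc_of_le (hmono i)] at hmem
    have htlt : t < c (i+1) := lt_of_le_of_ne hmem.2 ht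
    have h1 : (i : ℝ) / 2 ^ n < t := hmem.1
    have h2 : t < ((i : ℝ) + 1) / 2 ^ n := by
      have : c (i+1) = ((i:ℝ)+1)/2^n := by rw [hc]; push_cast; ring_nf
      rwa [this] at htlt
    simp only [hg, hv]
    congr 1
    congr 1
    apply Finset.sum_congr rfl
    intro j _
    rw [rademacher_eq_radSign j.2 h1 h2]
  have hint : ∀ i, i < 2 ^ n → IntervalIntegrable g volume (c i) (c (i+1)) := by
    intro i hi
    rw [intervalIntegrable_iff]
    have hconst : IntegrableOn (fun _ : ℝ => v i) (Set.uIoc (c i) (c (i+1))) volume := by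
      rw [Set.uIoc_of_le (hmono i)]
      exact integrableOn_const measure_Ioc_lt_top.ne
    apply hconst.congr
    have h1 : ∀ᵐ t ∂(volume.restrict (Set.uIoc (c i) (c (i+1)))),
        t ∈ Set.uIoc (c i) (c (i+1)) → g t = v i := ae_restrict_of_ae (hae i hi)
    have h2 : ∀ᵐ t ∂(volume.restrict (Set.uIoc (c i) (c (i+1)))),
        t ∈ Set.uIoc (c i) (c (i+1)) := ae_restrict_mem measurableSet_uIoc
    filter_upwards [h1, h2] with t h1 h2
    exact (h1 h2).symm
  have hsum := intervalIntegral.sum_integral_adjacent_intervals (μ := volume) (a := c)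
      (n := 2 ^ n) (fun k hk => hint k hk)
  have hc0 : c 0 = 0 := by simp [hc]
  have hcN : c (2 ^ n) = 1 := by
    rw [hc]; push_cast; rw [div_self (by positivity)]
  have hpiece : ∀ i, i < 2 ^ n →
      (∫ t in (c i)..(c (i+1)), g t) = ((2:ℝ) ^ n)⁻¹ * v i := by
    intro i hi
    rw [intervalIntegral.integral_congr_ae (hae i hi), intervalIntegral.integral_const]
    rw [hc]
    push_cast
    rw [smul_eq_mul]
    congr 1
    field_simp
    ring
  have hIcc : (∫ t in Set.Icc (0:ℝ) 1, g t) = ∫ t in (0:ℝ)..1, g t := by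
    rw [MeasureTheory.integral_Icc_eq_integral_Ioc,
      intervalIntegral.integral_of_le (by norm_num : (0:ℝ) ≤ 1)]
  rw [hIcc, ← hc0, ← hcN, ← hsum]
  exact Finset.sum_congr rfl fun i hi => hpiece i (Finset.mem_range.mp hi)

lemma abs_rpow_convex {p : ℝ} (hp : 1 ≤ p) (u v t : ℝ) (ht : |t| ≤ 1) :
    |(1 + t) / 2 * u + (1 - t) / 2 * v| ^ p
      ≤ (1 + t) / 2 * |u| ^ p + (1 - t) / 2 * |v| ^ p := by
  rw [abs_le] at ht
  have hl : (0:ℝ) ≤ (1 + t) / 2 := by linarith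
  have hm : (0:ℝ) ≤ (1 - t) / 2 := by linarith
  have hlm : (1 + t) / 2 + (1 - t) / 2 = 1 := by ring
  have step1 : |(1 + t) / 2 * u + (1 - t) / 2 * v| ≤ (1 + t) / 2 * |u| + (1 - t) / 2 * |v| := by
    calc |(1 + t) / 2 * u + (1 - t) / 2 * v| ≤ |(1 + t) / 2 * u| + |(1 - t) / 2 * v| := abs_add_le _ _
    _ = (1 + t) / 2 * |u| + (1 - t) / 2 * |v| := by
        rw [abs_mul, abs_mul, abs_of_nonneg hl, abs_of_nonneg hm]
  have step2 : |(1 + t) / 2 * u + (1 - t) / 2 * v| ^ p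
      ≤ ((1 + t) / 2 * |u| + (1 - t) / 2 * |v|) ^ p :=
    Real.rpow_le_rpow (abs_nonneg _) step1 (by linarith)
  have step3 := (convexOn_rpow hp).2 (Set.mem_Ici.mpr (abs_nonneg u))
    (Set.mem_Ici.mpr (abs_nonneg v)) hl hm hlm
  simp only [smul_eq_mul] at step3
  exact step2.trans step3

/-- The discretized `p`-th moment of a Rademacher sum with coefficients `y j * a j`. -/
noncomputable def radG (p : ℝ) (n : ℕ) (a : Fin n → ℝ) (y : Fin n → ℝ) : ℝ :=
  ∑ i ∈ Finset.range (2 ^ n), |∑ j : Fin n, y j * a j * radSign n i j.1| ^ p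

lemma radG_nonneg (p : ℝ) (n : ℕ) (a y : Fin n → ℝ) : 0 ≤ radG p n a y :=
  Finset.sum_nonneg fun _ _ => Real.rpow_nonneg (abs_nonneg _) _

lemma radG_flip (p : ℝ) (n : ℕ) (a : Fin n → ℝ) (k : Fin n) (y : Fin n → ℝ) :
    radG p n a (Function.update y k (-(y k))) = radG p n a y := by
  unfold radG
  have hm : 2 ^ (n - 1 - k.1) < 2 ^ n := Nat.pow_lt_pow_right (by norm_num) (by omega)
  apply Finset.sum_nbij' (i := fun i => i ^^^ 2 ^ (n - 1 - k.1))
    (j := fun i => i ^^^ 2 ^ (n - 1 - k.1))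
  · intro i hi
    simp only [Finset.mem_range] at hi ⊢
    exact Nat.xor_lt_two_pow hi hm
  · intro i hi
    simp only [Finset.mem_range] at hi ⊢
    exact Nat.xor_lt_two_pow hi hm
  · intro i _; exact Nat.xor_xor_cancel_right _ _
  · intro i _; exact Nat.xor_xor_cancel_right _ _
  · intro i _
    congr 1
    congr 1
    apply Finset.sum_congr rfl
    intro j _
    rw [radSign_xor n i j.1 k.1 j.2 k.2]
    rcases eq_or_ne j k with rfl | hne
    · simp only [Function.update_self, if_pos trivial, if_pos rfl]
      ring
    · have : j.1 ≠ k.1 := fun hh => hne (Fin.ext hh)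
      rw [Function.update_of_ne hne, if_neg this]

lemma radG_update_le {p : ℝ} (hp : 1 ≤ p) (n : ℕ) (a : Fin n → ℝ) (k : Fin n)
    (y : Fin n → ℝ) (t : ℝ) (ht : |t| ≤ 1) :
    radG p n a (Function.update y k t) ≤ radG p n a (Function.update y k 1) := by
  have hflip : radG p n a (Function.update y k (-1:ℝ)) = radG p n a (Function.update y k 1) := by
    have h := radG_flip p n a k (Function.update y k (1:ℝ))
    rw [Function.update_self, Function.update_idem] at h
    norm_num at h
    exact h
  have hF : ∀ (s : ℝ) (i : ℕ),
      (∑ j : Fin n, Function.update y k s j * a j * radSign n i j.1)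
        = (∑ j ∈ Finset.univ.erase k, y j * a j * radSign n i j.1)
            + s * (a k * radSign n i k.1) := by
    intro s i
    rw [← Finset.sum_erase_add _ _ (Finset.mem_univ k)]
    congr 1
    · apply Finset.sum_congr rfl
      intro j hj
      rw [Function.update_of_ne (Finset.ne_of_mem_erase hj)]
    · rw [Function.update_self]; ring
  have key : radG p n a (Function.update y k t)
      ≤ (1 + t)/2 * radG p n a (Function.update y k 1)
        + (1 - t)/2 * radG p n a (Function.update y k (-1:ℝ)) := by
    unfold radG
    rw [Finset.mul_sum, Finset.mul_sum, ← Finset.sum_add_distrib]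
    apply Finset.sum_le_sum
    intro i _
    rw [hF t i, hF 1 i, hF (-1) i]
    set A := ∑ j ∈ Finset.univ.erase k, y j * a j * radSign n i j.1
    set B := a k * radSign n i k.1
    have harg : A + t * B = (1 + t)/2 * (A + 1 * B) + (1 - t)/2 * (A + (-1) * B) := by ring
    rw [harg]
    exact abs_rpow_convex hp _ _ t ht
  calc radG p n a (Function.update y k t)
      ≤ (1 + t)/2 * radG p n a (Function.update y k 1)
        + (1 - t)/2 * radG p n a (Function.update y k (-1:ℝ)) := key
    _ = radG p n a (Function.update y k 1) := by rw [hflip]; ring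

lemma radG_le_one {p : ℝ} (hp : 1 ≤ p) (n : ℕ) (a : Fin n → ℝ) (y : Fin n → ℝ)
    (hy : ∀ j, |y j| ≤ 1) : radG p n a y ≤ radG p n a (fun _ => 1) := by
  suffices claim : ∀ m : ℕ, ∀ y : Fin n → ℝ, (∀ j, |y j| ≤ 1) →
      (∀ j : Fin n, m ≤ j.1 → y j = 1) → radG p n a y ≤ radG p n a (fun _ => 1) by
    exact claim n y hy (fun j hj => absurd j.2 (by omega))
  intro m
  induction m with
  | zero =>
    intro y hy hy1
    have : y = fun _ => 1 := funext fun j => hy1 j (Nat.zero_le _)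
    rw [this]
  | succ m ih =>
    intro y hy hy1
    by_cases hm : m < n
    · set k : Fin n := ⟨m, hm⟩
      have h0 : radG p n a y = radG p n a (Function.update y k (y k)) := by
        rw [Function.update_eq_self]
      rw [h0]
      calc radG p n a (Function.update y k (y k))
          ≤ radG p n a (Function.update y k 1) := radG_update_le hp n a k y (y k) (hy k)
        _ ≤ radG p n a (fun _ => 1) := by
            apply ih
            · intro j
              rcases eq_or_ne j k with rfl | hne
              · simp
              · rw [Function.update_of_ne hne]; exact hy j
            · intro j hj
              rcases eq_or_ne j k with rfl | hne
              · simp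
              · rw [Function.update_of_ne hne]
                apply hy1
                have : j.1 ≠ m := fun hh => hne (Fin.ext hh)
                omega
    · apply ih y hy
      intro j hj
      exact absurd (lt_of_lt_of_le j.2 (not_lt.mp hm)) (not_lt.mpr (le_trans hj (by omega)))

noncomputable def bilinOfMatrix {N n : ℕ} (M : Fin N → Fin n → ℝ) :
    (Fin N → ℝ) →ₗ[ℝ] (Fin n → ℝ) →ₗ[ℝ] ℝ :=
  LinearMap.mk₂ ℝ (fun x y => ∑ i, ∑ j, x i * M i j * y j)
    (by intro x x' y; simp [add_mul, Finset.sum_add_distrib])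
    (by intro c x y; simp [Finset.mul_sum, mul_assoc])
    (by intro x y y'; simp [mul_add, Finset.sum_add_distrib])
    (by
      intro c x y
      simp only [smul_eq_mul, Pi.smul_apply, Finset.mul_sum]
      refine Finset.sum_congr rfl fun i _ => Finset.sum_congr rfl fun j _ => by ring)

lemma bilinOfMatrix_apply {N n : ℕ} (M : Fin N → Fin n → ℝ) (x : Fin N → ℝ) (y : Fin n → ℝ) :
    bilinOfMatrix M x y = ∑ i, ∑ j, x i * M i j * y j := rfl

lemma bilinOfMatrix_single {N n : ℕ} (M : Fin N → Fin n → ℝ) (i : Fin N) (j : Fin n) :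
    bilinOfMatrix M (Pi.single i 1) (Pi.single j 1) = M i j := by
  rw [bilinOfMatrix_apply]
  simp [Pi.single_apply, Finset.sum_ite_eq, ite_mul, mul_ite, zero_mul, mul_zero]

/-- Theorem `pppp` implies the Khintchine inequality (case `1 < p ≤ 2`), with the
same constant. -/
theorem bilinear_mixed_littlewood_implies_khintchine (p : ℝ) (hp1 : 1 < p) (hp2 : p ≤ 2)
    (D : ℝ) (hD : 0 ≤ D)
    (h : ∀ (N n : ℕ) (T : (Fin N → ℝ) →ₗ[ℝ] (Fin n → ℝ) →ₗ[ℝ] ℝ),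
      (∑ j : Fin n, (∑ i : Fin N, |T (Pi.single i 1) (Pi.single j 1)| ^ p) ^ ((2 : ℝ) / p))
          ^ ((1 : ℝ) / 2)
        ≤ D * bilinOpNorm (p / (p - 1)) T) :
    ∀ (n : ℕ) (a : Fin n → ℝ),
      (∑ j : Fin n, |a j| ^ (2 : ℝ)) ^ ((1 : ℝ) / 2)
        ≤ D * (∫ t in Set.Icc (0 : ℝ) 1,
            |∑ j : Fin n, a j * rademacher (j.1 + 1) t| ^ p) ^ (1 / p) := by
  intro n a
  have hp0 : (0:ℝ) < p := lt_trans one_pos hp1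
  have hpq : (p / (p - 1)).HolderConjugate p :=
    ((Real.holderConjugate_iff_eq_conjExponent hp1).2 rfl).symm
  set N := 2 ^ n with hN
  set c : ℝ := (((2:ℝ) ^ n)⁻¹) ^ (1/p) with hc
  have hc0 : (0:ℝ) ≤ c := Real.rpow_nonneg (by positivity) _
  have hcp : c ^ p = ((2:ℝ) ^ n)⁻¹ := by
    rw [hc, ← Real.rpow_mul (by positivity), one_div_mul_cancel hp0.ne', Real.rpow_one]
  set M : Fin N → Fin n → ℝ := fun i j => c * (a j * radSign n i.1 j.1) with hM
  set T := bilinOfMatrix M with hT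
  -- the LHS of the hypothesis equals the LHS of the goal
  have hLHS : (∑ j : Fin n, (∑ i : Fin N, |T (Pi.single i 1) (Pi.single j 1)| ^ p)
      ^ ((2:ℝ)/p)) = ∑ j : Fin n, |a j| ^ (2:ℝ) := by
    apply Finset.sum_congr rfl
    intro j _
    have hinner : ∀ i : Fin N, |T (Pi.single i 1) (Pi.single j 1)| ^ p
        = ((2:ℝ) ^ n)⁻¹ * |a j| ^ p := by
      intro i
      rw [hT, bilinOfMatrix_single]
      have habs : |M i j| = c * |a j| := by
        rw [hM]
        simp only []
        rw [abs_mul, abs_mul, radSign_abs, abs_of_nonneg hc0, mul_one]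
      rw [habs, Real.mul_rpow hc0 (abs_nonneg _), hcp]
    rw [Finset.sum_congr rfl (fun i _ => hinner i), Finset.sum_const, Finset.card_univ,
      Fintype.card_fin, nsmul_eq_mul]
    have hNval : (N:ℝ) * (((2:ℝ) ^ n)⁻¹ * |a j| ^ p) = |a j| ^ p := by
      rw [hN]; push_cast; field_simp
    rw [hNval, ← Real.rpow_mul (abs_nonneg _)]
    congr 1
    field_simp
  have hmain := h N n T
  rw [hLHS] at hmain
  -- compute the integral
  have hI : (∫ t in Set.Icc (0:ℝ) 1, |∑ j : Fin n, a j * rademacher (j.1 + 1) t| ^ p)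
      = ((2:ℝ) ^ n)⁻¹ * radG p n a (fun _ => 1) := by
    rw [integral_rad_eq, radG, Finset.mul_sum]
    apply Finset.sum_congr rfl
    intro i _
    simp [one_mul]
  have hG0 : (0:ℝ) ≤ ((2:ℝ) ^ n)⁻¹ * radG p n a (fun _ => 1) :=
    mul_nonneg (by positivity) (radG_nonneg _ _ _ _)
  -- bound the bilinear operator norm
  have hnorm : bilinOpNorm (p / (p - 1)) T
      ≤ (((2:ℝ) ^ n)⁻¹ * radG p n a (fun _ => 1)) ^ (1/p) := by
    apply Real.sSup_le
    · rintro z ⟨x, y, hx, hy, rfl⟩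
      have hyb : ∀ j, |y j| ≤ 1 := by
        intro j
        unfold linfNorm at hy
        exact le_trans (le_ciSup (f := fun i => |y i|)
          (Set.Finite.bddAbove (Set.finite_range _)) j) hy
      set gfun : Fin N → ℝ := fun i => ∑ j : Fin n, M i j * y j with hgf
      have hTxy : T x y = ∑ i : Fin N, x i * gfun i := by
        rw [hT, bilinOfMatrix_apply]
        apply Finset.sum_congr rfl
        intro i _
        rw [hgf]
        simp only []
        rw [Finset.mul_sum]
        apply Finset.sum_congr rfl
        intro j _
        ring
      have habs : |T x y| ≤ ∑ i : Fin N, |x i| * |gfun i| := by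
        rw [hTxy]
        refine le_trans (Finset.abs_sum_le_sum_abs _ _) ?_
        apply Finset.sum_le_sum
        intro i _
        rw [abs_mul]
      have hhold := Real.inner_le_Lp_mul_Lq (Finset.univ) (fun i => |x i|)
        (fun i => |gfun i|) hpq
      simp only [abs_abs] at hhold
      have hgsum : (∑ i : Fin N, |gfun i| ^ p) = ((2:ℝ) ^ n)⁻¹ * radG p n a y := by
        have hptwise : ∀ i : Fin N, |gfun i| ^ p
            = ((2:ℝ) ^ n)⁻¹ * |∑ j : Fin n, y j * a j * radSign n i.1 j.1| ^ p := by
          intro i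
          have hgi : gfun i = c * (∑ j : Fin n, y j * a j * radSign n i.1 j.1) := by
            rw [hgf]
            simp only []
            rw [Finset.mul_sum]
            apply Finset.sum_congr rfl
            intro j _
            rw [hM]
            ring
          rw [hgi, abs_mul, abs_of_nonneg hc0, Real.mul_rpow hc0 (abs_nonneg _), hcp]
        rw [Finset.sum_congr rfl (fun i _ => hptwise i), ← Finset.mul_sum, radG]
        congr 1
        rw [← Fin.sum_univ_eq_sum_range (fun i => |∑ j : Fin n, y j * a j * radSign n i j.1| ^ p)]
      have hGle : radG p n a y ≤ radG p n a (fun _ => 1) := radG_le_one hp1.le n a y hyb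
      have hxn : (∑ i : Fin N, |x i| ^ (p/(p-1))) ^ (1/(p/(p-1))) ≤ 1 := hx
      have hgn : (∑ i : Fin N, |gfun i| ^ p) ^ (1/p)
          ≤ (((2:ℝ) ^ n)⁻¹ * radG p n a (fun _ => 1)) ^ (1/p) := by
        apply Real.rpow_le_rpow (Finset.sum_nonneg fun _ _ => Real.rpow_nonneg (abs_nonneg _) _)
        · rw [hgsum]
          exact mul_le_mul_of_nonneg_left hGle (by positivity)
        · positivity
      calc |T x y| ≤ ∑ i : Fin N, |x i| * |gfun i| := habs
        _ ≤ (∑ i : Fin N, |x i| ^ (p/(p-1))) ^ (1/(p/(p-1)))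
              * (∑ i : Fin N, |gfun i| ^ p) ^ (1/p) := hhold
        _ ≤ 1 * (((2:ℝ) ^ n)⁻¹ * radG p n a (fun _ => 1)) ^ (1/p) := by
            apply mul_le_mul hxn hgn
            · exact Real.rpow_nonneg (Finset.sum_nonneg fun _ _ =>
                Real.rpow_nonneg (abs_nonneg _) _) _
            · norm_num
        _ = (((2:ℝ) ^ n)⁻¹ * radG p n a (fun _ => 1)) ^ (1/p) := one_mul _
    · exact Real.rpow_nonneg hG0 _
  calc (∑ j : Fin n, |a j| ^ (2:ℝ)) ^ ((1:ℝ)/2)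
      ≤ D * bilinOpNorm (p / (p - 1)) T := hmain
    _ ≤ D * (((2:ℝ) ^ n)⁻¹ * radG p n a (fun _ => 1)) ^ (1/p) :=
        mul_le_mul_of_nonneg_left hnorm hD
    _ = D * (∫ t in Set.Icc (0 : ℝ) 1,
          |∑ j : Fin n, a j * rademacher (j.1 + 1) t| ^ p) ^ (1/p) := by rw [hI]
end

section
/- Let 0 < r < 2 and m ∈ ℕ, m ≥ 1, and let K ≥ 0 be a constant such that for every N ∈ ℕ and every array of real scalars (y_{i₁…i_m})_{i₁,…,i_m=1}^{N} one has (∑_{i₁,…,i_m=1}^{N} |y_{i₁…i_m}|²)^{1/2} ≤ K · (∫_{[0,1]^m} |∑_{i₁,…,i_m=1}^{N} r_{i₁}(t₁)···r_{i_m}(t_m) y_{i₁…i_m}|^{r} dt₁···dt_m)^{1/r}. Then K ≥ 2^{m(2−r)/(2r)}. (This is witnessed by the array with y_{i₁…i_m} = 1 when all i₁, …, i_m ∈ {1,2} and y_{i₁…i_m} = 0 otherwise, for which the left side equals 2^{m/2} and the integral factor equals 2^{m(r−1)/r}.) -/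
open MeasureTheory Real Filter

lemma sin_neg_of_pi_lt {x : ℝ} (h1 : Real.pi < x) (h2 : x < 2 * Real.pi) : Real.sin x < 0 := by
  have := Real.sin_neg_of_neg_of_neg_pi_lt (x := x - 2 * Real.pi) (by linarith) (by linarith)
  rwa [Real.sin_sub_two_pi] at this

lemma rad12 {t : ℝ} : rademacher 1 t + rademacher 2 t
    = Real.sign (Real.sin (2 * Real.pi * t)) + Real.sign (Real.sin (4 * Real.pi * t)) := by
  norm_num [rademacher]

lemma oneD (r : ℝ) (hr0 : 0 < r) :
    ∫ t in Set.Icc (0:ℝ) 1, |rademacher 1 t + rademacher 2 t| ^ r = (2:ℝ) ^ r / 2 := by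
  have pi_pos := Real.pi_pos
  rw [MeasureTheory.integral_Icc_eq_integral_Ioc, MeasureTheory.integral_Ioc_eq_integral_Ioo]
  set S : Set ℝ := Set.Ioo 0 4⁻¹ ∪ Set.Ioo (3/4) 1 with hS
  have hz : (volume : Measure ℝ) ({4⁻¹, 2⁻¹, 3/4} : Set ℝ) = 0 :=
    Set.Finite.measure_zero (Set.toFinite _) volume
  have hae : ∀ᵐ t : ℝ, t ∉ ({4⁻¹, 2⁻¹, 3/4} : Set ℝ) := measure_eq_zero_iff_ae_notMem.mp hz
  have hcongr : ∀ᵐ t : ℝ, t ∈ Set.Ioo (0:ℝ) 1 →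
      |rademacher 1 t + rademacher 2 t| ^ r = S.indicator (fun _ => (2:ℝ) ^ r) t := by
    filter_upwards [hae] with t ht hmem
    obtain ⟨ht0, ht1⟩ := hmem
    simp only [Set.mem_insert_iff, Set.mem_singleton_iff, not_or] at ht
    obtain ⟨h14, h12, h34⟩ := ht
    rw [rad12]
    rcases lt_or_gt_of_ne h14 with h14 | h14
    · -- t ∈ (0, 1/4)
      rw [Real.sign_of_pos (Real.sin_pos_of_pos_of_lt_pi (by nlinarith) (by nlinarith)),
        Real.sign_of_pos (Real.sin_pos_of_pos_of_lt_pi (by nlinarith) (by nlinarith)),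
        Set.indicator_of_mem (Set.mem_union_left _ (Set.mem_Ioo.mpr ⟨ht0, h14⟩))]
      norm_num
    rcases lt_or_gt_of_ne h12 with h12 | h12
    · -- t ∈ (1/4, 1/2)
      rw [Real.sign_of_pos (Real.sin_pos_of_pos_of_lt_pi (by nlinarith) (by nlinarith)),
        Real.sign_of_neg (sin_neg_of_pi_lt (by nlinarith) (by nlinarith)),
        Set.indicator_of_notMem (by
          simp only [hS, Set.mem_union, Set.mem_Ioo, not_or, not_and_or, not_lt]
          constructor
          · right; linarith
          · left; linarith)]
      norm_num
      exact Real.zero_rpow (ne_of_gt hr0)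
    rcases lt_or_gt_of_ne h34 with h34 | h34
    · -- t ∈ (1/2, 3/4)
      have h4 : Real.sin (4 * Real.pi * t) = Real.sin (4 * Real.pi * t - 2 * Real.pi) :=
        (Real.sin_sub_two_pi _).symm
      rw [Real.sign_of_neg (sin_neg_of_pi_lt (by nlinarith) (by nlinarith)),
        h4, Real.sign_of_pos (Real.sin_pos_of_pos_of_lt_pi (by nlinarith) (by nlinarith)),
        Set.indicator_of_notMem (by
          simp only [hS, Set.mem_union, Set.mem_Ioo, not_or, not_and_or, not_lt]
          constructor
          · right; linarith
          · left; linarith)]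
      norm_num
      exact Real.zero_rpow (ne_of_gt hr0)
    · -- t ∈ (3/4, 1)
      have h4 : Real.sin (4 * Real.pi * t) = Real.sin (4 * Real.pi * t - 2 * Real.pi) :=
        (Real.sin_sub_two_pi _).symm
      rw [Real.sign_of_neg (sin_neg_of_pi_lt (by nlinarith) (by nlinarith)),
        h4, Real.sign_of_neg (sin_neg_of_pi_lt (by nlinarith) (by nlinarith)),
        Set.indicator_of_mem (Set.mem_union_right _ (Set.mem_Ioo.mpr ⟨h34, ht1⟩))]
      norm_num
  rw [MeasureTheory.setIntegral_congr_ae measurableSet_Ioo hcongr,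
    MeasureTheory.setIntegral_indicator (measurableSet_Ioo.union measurableSet_Ioo)]
  have hsub : Set.Ioo (0:ℝ) 1 ∩ S = S := by
    apply Set.inter_eq_right.mpr
    apply Set.union_subset
    · exact Set.Ioo_subset_Ioo le_rfl (by norm_num)
    · exact Set.Ioo_subset_Ioo (by norm_num) le_rfl
  rw [hsub, MeasureTheory.setIntegral_const]
  have hdisj : Disjoint (Set.Ioo (0:ℝ) 4⁻¹) (Set.Ioo (3/4) 1) := by
    apply Set.disjoint_left.mpr
    rintro x ⟨_, hx2⟩ ⟨hx3, _⟩
    linarith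
  rw [hS, measureReal_def, measure_union hdisj measurableSet_Ioo, Real.volume_Ioo, Real.volume_Ioo,
    ← ENNReal.ofReal_add (by norm_num) (by norm_num)]
  norm_num
  ring

/-- Any constant in the multiple Khintchine inequality (`0 < r < 2`) is at least
`2^{m(2-r)/(2r)}`. -/
theorem multiple_khintchine_lower_bound (r : ℝ) (hr0 : 0 < r) (hr2 : r < 2)
    (m : ℕ) (hm : 1 ≤ m) (K : ℝ) (hK : 0 ≤ K)
    (h : ∀ (N : ℕ) (y : (Fin m → Fin N) → ℝ),
      (∑ i : Fin m → Fin N, |y i| ^ (2 : ℝ)) ^ ((1 : ℝ) / 2)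
        ≤ K * (∫ t : Fin m → ℝ in Set.Icc 0 1,
            |∑ i : Fin m → Fin N,
              (∏ k, rademacher ((i k).1 + 1) (t k)) * y i| ^ r) ^ (1 / r)) :
    (2 : ℝ) ^ ((m : ℝ) * (2 - r) / (2 * r)) ≤ K := by

  have hrne : r ≠ 0 := ne_of_gt hr0
  set f : ℝ → ℝ := fun t => |rademacher 1 t + rademacher 2 t| ^ r with hf
  have key := h 2 (fun _ => 1)
  -- rewrite integrand
  have hint : ∀ t : Fin m → ℝ,
      |∑ i : Fin m → Fin 2, (∏ k, rademacher ((i k).1 + 1) (t k)) * (fun _ => (1:ℝ)) i| ^ r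
        = ∏ k, f (t k) := by
    intro t
    simp only [mul_one]
    rw [← Fintype.prod_sum fun k (j : Fin 2) => rademacher (j.1 + 1) (t k)]
    rw [Finset.abs_prod, ← Real.finset_prod_rpow _ _ (fun k _ => abs_nonneg _) r]
    refine Finset.prod_congr rfl fun k _ => ?_
    congr 1
    rw [Fin.sum_univ_two]
    rfl
  -- LHS value
  have hlhs : (∑ i : Fin m → Fin 2, |(fun _ => (1:ℝ)) i| ^ (2:ℝ)) ^ ((1:ℝ)/2)
      = (2:ℝ) ^ ((m:ℝ) / 2) := by
    simp only [abs_one, Real.one_rpow, Finset.sum_const, Finset.card_univ, Fintype.card_fun,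
      Fintype.card_fin, nsmul_eq_mul, mul_one]
    push_cast
    rw [← Real.rpow_natCast (2:ℝ) m, ← Real.rpow_mul (by norm_num)]
    ring_nf
  -- integral value
  have hmeas : MeasurableSet (Set.Icc (0 : Fin m → ℝ) 1) := measurableSet_Icc
  have hind : ∀ t : Fin m → ℝ,
      (Set.Icc (0:Fin m → ℝ) 1).indicator (fun t => ∏ k, f (t k)) t
        = ∏ k, (Set.Icc (0:ℝ) 1).indicator f (t k) := by
    intro t
    by_cases ht : t ∈ Set.Icc (0:Fin m → ℝ) 1
    · rw [Set.indicator_of_mem ht]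
      exact Finset.prod_congr rfl fun k _ =>
        (Set.indicator_of_mem (Set.mem_Icc.mpr ⟨ht.1 k, ht.2 k⟩) _).symm
    · rw [Set.indicator_of_notMem ht]
      have hex : ∃ k, t k ∉ Set.Icc (0:ℝ) 1 := by
        by_contra hc
        push_neg at hc
        exact ht ⟨fun k => (hc k).1, fun k => (hc k).2⟩
      obtain ⟨k, hk⟩ := hex
      exact (Finset.prod_eq_zero (Finset.mem_univ k) (Set.indicator_of_notMem hk _)).symm
  have hJ : (∫ t : Fin m → ℝ in Set.Icc 0 1, ∏ k, f (t k)) = ((2:ℝ) ^ r / 2) ^ m := by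
    rw [← MeasureTheory.integral_indicator hmeas]
    rw [show ((Set.Icc (0:Fin m → ℝ) 1).indicator fun t => ∏ k, f (t k))
        = fun t => ∏ k, (Set.Icc (0:ℝ) 1).indicator f (t k) from funext hind]
    rw [MeasureTheory.integral_fintype_prod_volume_eq_pow ((Set.Icc (0:ℝ) 1).indicator f),
      MeasureTheory.integral_indicator measurableSet_Icc, oneD r hr0, Fintype.card_fin]
  rw [hlhs] at key
  have hint' : (∫ t : Fin m → ℝ in Set.Icc 0 1,
      |∑ i : Fin m → Fin 2, (∏ k, rademacher ((i k).1 + 1) (t k)) * (fun _ => (1:ℝ)) i| ^ r)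
      = ((2:ℝ) ^ r / 2) ^ m := by
    rw [← hJ]
    exact MeasureTheory.integral_congr_ae (Filter.Eventually.of_forall fun t => hint t)
  rw [hint'] at key
  -- now: 2^(m/2) ≤ K * ((2^r/2)^m)^(1/r)
  have hbase : (2:ℝ) ^ r / 2 = (2:ℝ) ^ (r - 1) := by
    rw [Real.rpow_sub (by norm_num), Real.rpow_one]
  have hval : (((2:ℝ) ^ r / 2) ^ m) ^ ((1:ℝ)/r) = (2:ℝ) ^ ((r - 1) * m / r) := by
    rw [hbase, ← Real.rpow_natCast ((2:ℝ) ^ (r-1)) m,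
      ← Real.rpow_mul (by norm_num : (0:ℝ) ≤ 2), ← Real.rpow_mul (by norm_num : (0:ℝ) ≤ 2)]
    congr 1
    field_simp
  rw [hval] at key
  have hb : (0:ℝ) < (2:ℝ) ^ ((r - 1) * m / r) := Real.rpow_pos_of_pos (by norm_num) _
  have hfin := (div_le_iff₀ hb).mpr key
  rw [← Real.rpow_sub (by norm_num : (0:ℝ) < 2)] at hfin
  have hexp : (m:ℝ) / 2 - (r - 1) * m / r = (m:ℝ) * (2 - r) / (2 * r) := by
    field_simp
    ring
  rwa [hexp] at hfin
end
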